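/- Let R be a finite set of reactions with a strict partial order ≺ and a food set F. Suppose that for every reaction r_j and every F-reactant x of r_j not in F, there exists r' ≺ r_j such that x is a net-product of r'. Then for every reaction r_j and every F-reactant x of r_j not in F, there exists a reaction r̄ (with r̄ ≺ r_j) such that x is a net-product of r̄ and x is not an F-reactant of r̄. -/

import Mathlib

/-- If every non-food F-reactant of every reaction is a net-product of a
strictly earlier reaction (w.r.t. a strict partial order on a finite reaction
set), then it is in fact a net-product of a strictly earlier reaction of which
it is not an F-reactant. -/
theorem stmt4 {X R : Type*} [Fintype R] (sm sp σm σp k : X → R → ℝ)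
    (hσm : ∀ x r, 0 ≤ σm x r) (hσp : ∀ x r, 0 ≤ σp x r) (hk : ∀ x r, 0 ≤ k x r)
    (hm : ∀ x r, σm x r + k x r = sm x r) (hp : ∀ x r, σp x r + k x r = sp x r)
    (F : Set X) (prec : R → R → Prop) (hso : IsStrictOrder R prec)
    (h : ∀ r x, 0 < σm x r → x ∉ F → ∃ r', prec r' r ∧ sm x r' < sp x r') :
    ∀ r x, 0 < σm x r → x ∉ F →
      ∃ rb, prec rb r ∧ sm x rb < sp x rb ∧ ¬ (0 < σm x rb) := by
  have hirr := hso.toIrrefl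
  have htr := hso.toIsTrans
  have wf : WellFounded prec := Finite.wellFounded_of_trans_of_irrefl prec
  intro r x
  induction r using wf.induction with
  | _ r ih =>
    intro hσ hF
    obtain ⟨r', hr', hnet⟩ := h r x hσ hF
    by_cases hc : 0 < σm x r'
    · obtain ⟨rb, hrb, hn, hnr⟩ := ih r' hr' hc hF
      exact ⟨rb, Trans.trans hrb hr', hn, hnr⟩
    · exact ⟨r', hr', hnet, hc⟩
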